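/- Let X be a δ-hyperbolic geodesic metric space and U ⊆ X a subset. If there exists an r-coarsely Lipschitz retraction ρ : X → U, then U is K-quasiconvex in X for a constant K depending only on δ and r. -/

import Mathlib

open Metric Set
open scoped NNReal

/-- `γ` restricted to `[a,b]` is a unit-speed geodesic. -/
def IsGeodesicOn {X : Type*} [MetricSpace X] (γ : ℝ → X) (a b : ℝ) : Prop :=
  ∀ s ∈ Set.Icc a b, ∀ t ∈ Set.Icc a b, dist (γ s) (γ t) = |s - t|

/-- `γ : [a,b] → X` is a geodesic from `x` to `y`. -/
def GeodesicFrom {X : Type*} [MetricSpace X] (γ : ℝ → X) (a b : ℝ) (x y : X) : Prop :=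
  a ≤ b ∧ IsGeodesicOn γ a b ∧ γ a = x ∧ γ b = y

/-- `X` is a geodesic metric space. -/
def GeodesicSpace (X : Type*) [MetricSpace X] : Prop :=
  ∀ x y : X, ∃ γ : ℝ → X, GeodesicFrom γ 0 (dist x y) x y

/-- `A` is `k`-quasiconvex: every geodesic between points of `A` stays in the
`k`-neighbourhood of `A`. -/
def QuasiconvexSet {X : Type*} [MetricSpace X] (k : ℝ) (A : Set X) : Prop :=
  ∀ x ∈ A, ∀ y ∈ A, ∀ γ : ℝ → X, ∀ a b : ℝ, GeodesicFrom γ a b x y →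
    ∀ t ∈ Set.Icc a b, ∃ p ∈ A, dist (γ t) p ≤ k

/-- `X` is `δ`-hyperbolic in the sense of Rips: all geodesic triangles are `δ`-slim. -/
def SlimTriangles (X : Type*) [MetricSpace X] (δ : ℝ) : Prop :=
  ∀ (x y z : X) (γ₁ γ₂ γ₃ : ℝ → X) (a₁ b₁ a₂ b₂ a₃ b₃ : ℝ),
    GeodesicFrom γ₁ a₁ b₁ x y → GeodesicFrom γ₂ a₂ b₂ y z → GeodesicFrom γ₃ a₃ b₃ x z →
    ∀ t ∈ Set.Icc a₃ b₃,
      (∃ s ∈ Set.Icc a₁ b₁, dist (γ₃ t) (γ₁ s) ≤ δ) ∨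
      (∃ s ∈ Set.Icc a₂ b₂, dist (γ₃ t) (γ₂ s) ≤ δ)

/-- `γ : [a,b] → X` is a `lam`-quasigeodesic. -/
def QuasigeodesicOn {X : Type*} [MetricSpace X] (lam : ℝ) (γ : ℝ → X) (a b : ℝ) : Prop :=
  ∀ s ∈ Set.Icc a b, ∀ t ∈ Set.Icc a b,
    |s - t| / lam - lam ≤ dist (γ s) (γ t) ∧ dist (γ s) (γ t) ≤ lam * |s - t| + lam

/-- `p` is a nearest point projection of `x` on `U`. -/
def NearestPointProj {X : Type*} [MetricSpace X] (U : Set X) (x p : X) : Prop :=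
  p ∈ U ∧ ∀ q ∈ U, dist x p ≤ dist x q

/-- Hausdorff distance between `A` and `B` is at most `D`. -/
def HausLE {X : Type*} [MetricSpace X] (D : ℝ) (A B : Set X) : Prop :=
  (∀ a ∈ A, ∃ b ∈ B, dist a b ≤ D) ∧ (∀ b ∈ B, ∃ a ∈ A, dist a b ≤ D)

/-- A function `ℝ → ℝ` is metrically proper (preimages of bounded sets of
nonnegative reals are bounded). -/
def ProperFun (ψ : ℝ → ℝ) : Prop :=
  ∀ M : ℝ, ∃ N : ℝ, ∀ r : ℝ, 0 ≤ r → ψ r ≤ M → r ≤ N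

/-- A function `ℝ≥0 → ℝ≥0` is metrically proper. -/
def ProperNN (ψ : ℝ≥0 → ℝ≥0) : Prop :=
  ∀ M : ℝ≥0, ∃ N : ℝ≥0, ∀ r : ℝ≥0, ψ r ≤ M → r ≤ N

lemma min_lip (p q l : ℝ) : |min p l - min q l| ≤ |p - q| := by
  rcases le_total p l with h1 | h1 <;> rcases le_total q l with h2 | h2 <;>
    rw [abs_sub_le_iff] <;> constructor <;>
    simp [min_eq_left, min_eq_right, h1, h2] <;>
    rcases abs_cases (p - q) with ⟨h3, h4⟩ | ⟨h3, h4⟩ <;>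
    linarith [min_le_left p l, min_le_right p l, min_le_left q l, min_le_right q l]

lemma logb_le_sqrt {w : ℝ} (hw : 1 ≤ w) : Real.logb 2 w ≤ 4 * Real.sqrt w := by
  have hl2 : (0.6931471803 : ℝ) < Real.log 2 := Real.log_two_gt_d9
  have hw0 : (0 : ℝ) < w := by linarith
  have hlw : 0 ≤ Real.log w := Real.log_nonneg hw
  have hsq : Real.log (Real.sqrt w) ≤ Real.sqrt w - 1 :=
    Real.log_le_sub_one_of_pos (Real.sqrt_pos.mpr hw0)
  have hls : Real.log (Real.sqrt w) = Real.log w / 2 := Real.log_sqrt (le_of_lt hw0)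
  have h1 : Real.log w ≤ 2 * Real.sqrt w := by
    rw [hls] at hsq
    have h0 : (0:ℝ) ≤ Real.sqrt w := Real.sqrt_nonneg w
    linarith
  rw [Real.logb, div_le_iff₀ (by linarith)]
  nlinarith [Real.sqrt_nonneg w]

lemma chain_lemma {X : Type} [MetricSpace X] {δ : ℝ}
    (hgeo : GeodesicSpace X) (hslim : SlimTriangles X δ)
    {g : ℝ} (hg : 0 ≤ g) :
    ∀ (n m : ℕ), m ≤ 2 ^ n → ∀ c : ℕ → X,
      (∀ i, i < m → dist (c i) (c (i + 1)) ≤ g) →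
      ∀ (γ : ℝ → X) (a b : ℝ), GeodesicFrom γ a b (c 0) (c m) →
      ∀ t ∈ Set.Icc a b, ∃ i ≤ m, dist (γ t) (c i) ≤ n * δ + g / 2 := by
  intro n
  induction n with
  | zero =>
    intro m hm c hc γ a b hγ t ht
    obtain ⟨hab, hgeod, ha, hb⟩ := hγ
    interval_cases m
    · have h0 : dist (γ a) (γ b) = |a - b| :=
        hgeod a ⟨le_refl a, hab⟩ b ⟨hab, le_refl b⟩
      rw [ha, hb, dist_self] at h0
      have hba : a = b := by
        have := abs_eq_zero.mp h0.symm; linarith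
      have hta : t = a := le_antisymm (hba ▸ ht.2) ht.1
      refine ⟨0, le_refl _, ?_⟩
      rw [hta, ha, dist_self]
      simp; positivity
    · have hsum : dist (c 0) (c 1) ≤ g := hc 0 (by norm_num)
      have h01 : dist (γ a) (γ b) = |a - b| :=
        hgeod a ⟨le_refl a, hab⟩ b ⟨hab, le_refl b⟩
      have hba : dist (c 0) (c 1) = b - a := by
        rw [← ha, ← hb, h01, abs_sub_comm, abs_of_nonneg (by linarith)]
      have h0 : dist (γ t) (c 0) = t - a := by
        rw [← ha, hgeod t ht a ⟨le_refl a, hab⟩, abs_of_nonneg (by linarith [ht.1])]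
      have h1 : dist (γ t) (c 1) = b - t := by
        rw [← hb, hgeod t ht b ⟨hab, le_refl b⟩, abs_sub_comm,
          abs_of_nonneg (by linarith [ht.2])]
      rcases le_or_gt (t - a) (g / 2) with h | h
      · exact ⟨0, by norm_num, by rw [h0]; simpa using h⟩
      · refine ⟨1, le_refl _, ?_⟩
        rw [h1]; simp only [Nat.cast_zero, zero_mul, zero_add]; linarith
  | succ n ih =>
    intro m hm c hc γ a b hγ t ht
    set k := m / 2 with hk
    have hkm : k ≤ m := Nat.div_le_self m 2
    have h2 : 2 ^ (n + 1) = 2 * 2 ^ n := by ring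
    have hk2 : k ≤ 2 ^ n := by omega
    have hmk2 : m - k ≤ 2 ^ n := by omega
    obtain ⟨σ₁, hσ₁⟩ := hgeo (c 0) (c k)
    obtain ⟨σ₂, hσ₂⟩ := hgeo (c k) (c m)
    rcases hslim (c 0) (c k) (c m) σ₁ σ₂ γ 0 (dist (c 0) (c k)) 0 (dist (c k) (c m))
        a b hσ₁ hσ₂ hγ t ht with ⟨s, hs, hd⟩ | ⟨s, hs, hd⟩
    · obtain ⟨i, hik, hd2⟩ := ih k hk2 c (fun i hi => hc i (lt_of_lt_of_le hi hkm))
        σ₁ 0 (dist (c 0) (c k)) hσ₁ s hs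
      refine ⟨i, le_trans hik hkm, ?_⟩
      calc dist (γ t) (c i) ≤ dist (γ t) (σ₁ s) + dist (σ₁ s) (c i) := dist_triangle _ _ _
        _ ≤ δ + (n * δ + g / 2) := add_le_add hd hd2
        _ = (n + 1 : ℕ) * δ + g / 2 := by push_cast; ring
    · have hkmk : k + (m - k) = m := by omega
      have hσ₂' : GeodesicFrom σ₂ 0 (dist (c k) (c m)) (c (k + 0)) (c (k + (m - k))) := by
        rw [Nat.add_zero, hkmk]; exact hσ₂
      obtain ⟨i, hik, hd2⟩ := ih (m - k) hmk2 (fun j => c (k + j))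
        (fun j hj => by
          have hlt : k + j < m := by omega
          have := hc (k + j) hlt
          simpa [Nat.add_assoc] using this)
        σ₂ 0 (dist (c k) (c m)) hσ₂' s hs
      refine ⟨k + i, by omega, ?_⟩
      calc dist (γ t) (c (k + i)) ≤ dist (γ t) (σ₂ s) + dist (σ₂ s) (c (k + i)) :=
          dist_triangle _ _ _
        _ ≤ δ + (n * δ + g / 2) := add_le_add hd hd2
        _ = (n + 1 : ℕ) * δ + g / 2 := by push_cast; ring

set_option maxHeartbeats 1000000

theorem stmt8 (δ r : ℝ) (hδ : 0 ≤ δ) (hr : 1 ≤ r) :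
    ∃ K : ℝ, ∀ (X : Type) [inst : MetricSpace X] (U : Set X) (ρ : X → X),
      GeodesicSpace X → SlimTriangles X δ →
      (∀ x : X, ρ x ∈ U) → (∀ x ∈ U, ρ x = x) →
      (∀ x y : X, dist (ρ x) (ρ y) ≤ r * dist x y + r) →
      QuasiconvexSet K U := by
  refine ⟨576*δ^2 + 4*δ + 4*r + 9, ?_⟩
  intro X _ U ρ hgeo hslim hρU hρid hρlip
  intro x hx y hy γ a₀ b₀ hγ t ht
  obtain ⟨hab, hgeod, hgax, hgby⟩ := hγ
  have hUne : U.Nonempty := ⟨x, hx⟩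
  set T := (fun s => infDist (γ s) U) '' Set.Icc a₀ b₀ with hT
  have hTne : T.Nonempty := ⟨_, ⟨a₀, ⟨le_refl _, hab⟩, rfl⟩⟩
  have hbdd : BddAbove T := by
    refine ⟨b₀ - a₀, ?_⟩
    rintro w ⟨s, hs, rfl⟩
    calc infDist (γ s) U ≤ dist (γ s) x := infDist_le_dist_of_mem hx
      _ = |s - a₀| := by rw [← hgax]; exact hgeod s hs a₀ ⟨le_refl _, hab⟩
      _ ≤ b₀ - a₀ := by rw [abs_of_nonneg (by linarith [hs.1])]; linarith [hs.2]
  set S := sSup T with hS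
  have hmemT : ∀ s ∈ Set.Icc a₀ b₀, infDist (γ s) U ≤ S :=
    fun s hs => le_csSup hbdd ⟨s, hs, rfl⟩
  have hS0 : 0 ≤ S := le_trans infDist_nonneg (hmemT a₀ ⟨le_refl _, hab⟩)
  have hmain : S ≤ 576*δ^2 + 4*δ + 4*r + 7 := by
    obtain ⟨w₀, hwT, hw⟩ := exists_lt_of_lt_csSup hTne (show S - 1 < S by linarith)
    obtain ⟨s₀, hs₀, rfl⟩ := hwT
    set u := max a₀ (s₀ - 2*S) with hu
    set v := min b₀ (s₀ + 2*S) with hv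
    have hau : a₀ ≤ u := le_max_left _ _
    have hus : u ≤ s₀ := max_le hs₀.1 (by linarith)
    have hsv : s₀ ≤ v := le_min hs₀.2 (by linarith)
    have hvb : v ≤ b₀ := min_le_left _ _
    have huv : u ≤ v := le_trans hus hsv
    have hIcc : Set.Icc u v ⊆ Set.Icc a₀ b₀ := Set.Icc_subset_Icc hau hvb
    have hgeod' : IsGeodesicOn γ u v := fun s hs t' ht' => hgeod s (hIcc hs) t' (hIcc ht')
    obtain ⟨a', ha'U, ha'⟩ : ∃ p ∈ U, dist (γ u) p < S + 1 :=
      (infDist_lt_iff hUne).1 (lt_of_le_of_lt (hmemT u ⟨hau, le_trans hus hs₀.2⟩) (by linarith))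
    obtain ⟨b', hb'U, hb'⟩ : ∃ p ∈ U, dist (γ v) p < S + 1 :=
      (infDist_lt_iff hUne).1 (lt_of_le_of_lt (hmemT v ⟨le_trans hs₀.1 hsv, hvb⟩) (by linarith))
    obtain ⟨σ, hσ⟩ := hgeo a' b'
    obtain ⟨hℓ0, hσg, hσ0, hσℓ⟩ := hσ
    set ℓ := dist a' b' with hℓ
    set m := ⌈ℓ⌉₊ with hm
    set c : ℕ → X := fun i => if i = 0 then γ u else if m + 2 ≤ i then γ v
      else ρ (σ (min ((i:ℝ) - 1) ℓ)) with hc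
    have hc0 : c 0 = γ u := rfl
    have hcM : c (m + 2) = γ v := by simp [hc]
    have hcint : ∀ i, 1 ≤ i → i ≤ m + 1 → c i = ρ (σ (min ((i:ℝ) - 1) ℓ)) := by
      intro i h1 h2
      simp only [hc]
      rw [if_neg (by omega), if_neg (by omega)]
    have hminmem : ∀ w : ℝ, 0 ≤ w → min w ℓ ∈ Set.Icc 0 ℓ :=
      fun w hw0 => ⟨le_min hw0 hℓ0, min_le_right _ _⟩
    -- gaps
    have hgap : ∀ i, i < m + 2 → dist (c i) (c (i+1)) ≤ S + 2*r + 1 := by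
      intro i hi
      rcases Nat.eq_zero_or_pos i with rfl | hipos
      · have hc1 : c 1 = ρ (σ (min ((1:ℝ) - 1) ℓ)) := by
          have := hcint 1 (le_refl _) (by omega)
          simpa using this
        have hmin0 : min ((1:ℝ) - 1) ℓ = 0 := by
          rw [show (1:ℝ) - 1 = 0 by ring, min_eq_left hℓ0]
        rw [hc0, hc1, hmin0, hσ0, hρid a' ha'U]
        linarith
      · rcases eq_or_lt_of_le (Nat.succ_le_of_lt hi) with heq | hlt
        · -- i = m + 1
          have him : i = m + 1 := by omega
          subst him
          have hcm1 : c (m+1) = ρ (σ (min (((m+1:ℕ):ℝ) - 1) ℓ)) := by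
            have := hcint (m+1) (by omega) (le_refl _)
            simpa using this
          have hmineq : min (((m+1:ℕ):ℝ) - 1) ℓ = ℓ := by
            rw [min_eq_right]
            push_cast
            have := Nat.le_ceil ℓ
            linarith
          rw [hcm1, hmineq, hσℓ, hρid b' hb'U, hcM, dist_comm]
          linarith
        · -- 1 ≤ i ≤ m : interior-interior
          have hile : i ≤ m := by omega
          have hci : c i = ρ (σ (min ((i:ℝ) - 1) ℓ)) := hcint i hipos (by omega)
          have hci1 : c (i+1) = ρ (σ (min ((i:ℝ)) ℓ)) := by
            have := hcint (i+1) (by omega) (by omega)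
            rw [this]
            norm_num
          have hi1 : (1:ℝ) ≤ (i:ℝ) := by exact_mod_cast hipos
          have hdσ : dist (σ (min ((i:ℝ) - 1) ℓ)) (σ (min ((i:ℝ)) ℓ)) ≤ 1 := by
            rw [hσg _ (hminmem _ (by linarith)) _ (hminmem _ (by linarith))]
            calc |min ((i:ℝ) - 1) ℓ - min ((i:ℝ)) ℓ| ≤ |((i:ℝ) - 1) - (i:ℝ)| :=
                min_lip _ _ _
              _ = 1 := by rw [show ((i:ℝ) - 1) - (i:ℝ) = -1 by ring]; simp
          rw [hci, hci1]
          calc dist (ρ (σ (min ((i:ℝ) - 1) ℓ))) (ρ (σ (min ((i:ℝ)) ℓ)))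
              ≤ r * dist (σ (min ((i:ℝ) - 1) ℓ)) (σ (min ((i:ℝ)) ℓ)) + r := hρlip _ _
            _ ≤ r * 1 + r := by
                have := mul_le_mul_of_nonneg_left hdσ (by linarith : (0:ℝ) ≤ r)
                linarith
            _ ≤ S + 2*r + 1 := by linarith
    -- apply chain lemma
    set n := Nat.clog 2 (m + 2) with hn
    have hMn : m + 2 ≤ 2 ^ n := Nat.le_pow_clog (by norm_num) _
    have hgeodFrom : GeodesicFrom γ u v (c 0) (c (m+2)) :=
      ⟨huv, hgeod', hc0.symm, hcM.symm⟩
    obtain ⟨i, him, hdi⟩ := chain_lemma hgeo hslim (g := S + 2*r + 1)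
      (by linarith) n (m+2) hMn c hgap γ u v hgeodFrom s₀ ⟨hus, hsv⟩
    -- lower bound
    have hUlow : ∀ p ∈ U, S - 1 ≤ dist (γ s₀) p :=
      fun p hp => le_trans (le_of_lt hw) (infDist_le_dist_of_mem hp)
    have hlow : S - 1 ≤ dist (γ s₀) (c i) := by
      rcases Nat.eq_zero_or_pos i with rfl | hipos
      · rw [hc0]
        rcases max_cases a₀ (s₀ - 2*S) with ⟨hmax, _⟩ | ⟨hmax, _⟩
        · have hux : γ u = x := by rw [hu, hmax, hgax]
          rw [hux]; exact hUlow x hx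
        · have hd : dist (γ s₀) (γ u) = |s₀ - u| :=
            hgeod' s₀ ⟨hus, hsv⟩ u ⟨le_refl _, huv⟩
          rw [hd, hu, hmax, show s₀ - (s₀ - 2*S) = 2*S by ring,
            abs_of_nonneg (by linarith)]
          linarith
      · rcases le_or_gt (m+2) i with hge | hlt
        · have hcv : c i = γ v := by
            simp only [hc]; rw [if_neg (by omega), if_pos hge]
          rw [hcv]
          rcases min_cases b₀ (s₀ + 2*S) with ⟨hmin, _⟩ | ⟨hmin, _⟩
          · have hvy : γ v = y := by rw [hv, hmin, hgby]
            rw [hvy]; exact hUlow y hy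
          · have hd : dist (γ s₀) (γ v) = |s₀ - v| :=
              hgeod' s₀ ⟨hus, hsv⟩ v ⟨huv, le_refl _⟩
            rw [hd, hv, hmin, show s₀ - (s₀ + 2*S) = -(2*S) by ring, abs_neg,
              abs_of_nonneg (by linarith)]
            linarith
        · have hci : c i = ρ (σ (min ((i:ℝ) - 1) ℓ)) := hcint i hipos (by omega)
          rw [hci]; exact hUlow _ (hρU _)
    have hkey : S ≤ 2 * n * δ + 2*r + 3 := by
      have := le_trans hlow hdi
      linarith
    -- bound n
    have hmreal : ((m + 2 : ℕ) : ℝ) ≤ 6*S + 5 := by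
      have h1 : (m:ℝ) < ℓ + 1 := Nat.ceil_lt_add_one hℓ0
      have h2 : ℓ ≤ dist a' (γ u) + dist (γ u) (γ v) + dist (γ v) b' :=
        dist_triangle4 a' (γ u) (γ v) b'
      have h3 : dist (γ u) (γ v) = v - u := by
        rw [hgeod' u ⟨le_refl _, huv⟩ v ⟨huv, le_refl _⟩, abs_sub_comm,
          abs_of_nonneg (by linarith)]
      have h4 : v - u ≤ 4*S := by
        have h5 := le_max_right a₀ (s₀ - 2*S)
        have h6 := min_le_right b₀ (s₀ + 2*S)
        rw [hu, hv] at *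
        linarith
      have h5 : dist a' (γ u) ≤ S + 1 := by rw [dist_comm]; linarith
      have h6 : dist (γ v) b' ≤ S + 1 := le_of_lt hb'
      push_cast
      linarith
    have hnR : (n : ℝ) ≤ Real.logb 2 (6*S + 7) + 1 := by
      have hM1 : (1:ℝ) ≤ 6*S + 7 := by linarith
      have hlogpos : 0 ≤ Real.logb 2 (6*S + 7) := Real.logb_nonneg one_lt_two hM1
      rcases Nat.eq_zero_or_pos n with hn0 | hn1
      · rw [hn0]; push_cast; linarith
      · have hpow : 2 ^ (n - 1) < m + 2 :=
          Nat.pow_pred_clog_lt_self (b := 2) (x := m + 2) (by norm_num) (by omega)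
        have hpowR : (2:ℝ) ^ (n-1 : ℕ) < ((m+2 : ℕ):ℝ) := by exact_mod_cast hpow
        have hMpos : (0:ℝ) < ((m+2 : ℕ):ℝ) := by positivity
        have hlt : Real.logb 2 ((2:ℝ) ^ (n-1:ℕ)) < Real.logb 2 ((m+2:ℕ):ℝ) :=
          Real.logb_lt_logb one_lt_two (by positivity) hpowR
        rw [Real.logb_pow, Real.logb_self_eq_one one_lt_two] at hlt
        have hmono : Real.logb 2 ((m+2:ℕ):ℝ) ≤ Real.logb 2 (6*S+7) :=
          (Real.logb_le_logb one_lt_two hMpos (by linarith)).mpr (by linarith [hmreal])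
        have hcast : ((n-1:ℕ):ℝ) = (n:ℝ) - 1 := by
          rw [Nat.cast_sub hn1]; norm_num
        rw [hcast] at hlt
        simp only [mul_one] at hlt
        linarith
    -- analytic endgame
    have hlogb : Real.logb 2 (6*S+7) ≤ 4 * Real.sqrt (6*S+7) :=
      logb_le_sqrt (by linarith)
    have hsq1 : Real.sqrt (6*S+7) ≤ 3 * Real.sqrt (S+1) := by
      have h9 : Real.sqrt (9*(S+1)) = 3 * Real.sqrt (S+1) := by
        rw [show (9:ℝ)*(S+1) = (3:ℝ)^2 * (S+1) by ring, Real.sqrt_mul (by positivity),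
          Real.sqrt_sq (by norm_num)]
      rw [← h9]; exact Real.sqrt_le_sqrt (by linarith)
    set W := Real.sqrt (S+1) with hWdef
    have hW0 : 0 ≤ W := Real.sqrt_nonneg _
    have hW2 : W^2 = S + 1 := Real.sq_sqrt (by linarith)
    have hfin : S ≤ 24*δ*W + 2*δ + 2*r + 3 := by
      have hnd : (n:ℝ) * δ ≤ (12*W + 1) * δ := by
        apply mul_le_mul_of_nonneg_right _ hδ
        calc (n:ℝ) ≤ Real.logb 2 (6*S + 7) + 1 := hnR
          _ ≤ 4 * (3 * W) + 1 := by linarith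
          _ = 12*W + 1 := by ring
      nlinarith [hkey, hnd]
    nlinarith [sq_nonneg (W - 24*δ), hW2, hfin, hW0]
  have hinf : infDist (γ t) U ≤ S := hmemT t ht
  have : infDist (γ t) U < 576*δ^2 + 4*δ + 4*r + 9 := by linarith
  obtain ⟨p, hp, hdp⟩ := (infDist_lt_iff hUne).1 this
  exact ⟨p, hp, le_of_lt hdp⟩
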